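/- arXiv:1008.2380 — 2 statements merged into one kernel-verified Lean document; each statement's English description precedes it below -/
import Mathlib

section
/- For the natural representation of sl₂(ℂ) on the free Lie algebra L on a, b: the space of Lie invariants of degree 2 is one-dimensional, spanned by [b,a], and the space of Lie invariants of degree 4 is zero. -/
/-!
Setting: the free Lie algebra `FL` over ℂ on two generators `a < b`, with the simple
Lie algebra sl₂(ℂ) (standard basis x, h, y, with ⁅h,x⁆ = 2x, ⁅h,y⁆ = −2y, ⁅x,y⁆ = h)
acting on `FL` by derivations extending its natural representation on the span of the
generators:  x.a = 0, x.b = a, h.a = a, h.b = −b, y.a = b, y.b = 0.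
The derivations `X H Y` realizing these actions are uniquely determined by their values
on the generators, so we quantify over derivations with the prescribed generator values.
-/

noncomputable section

/-- The free Lie algebra over ℂ on two generators. -/
abbrev FL : Type := FreeLieAlgebra ℂ (Fin 2)

/-- The generator `a`. -/
def genA : FL := FreeLieAlgebra.of ℂ 0

/-- The generator `b`. -/
def genB : FL := FreeLieAlgebra.of ℂ 1

/-- Interpret a nonassociative word on the generators as a Lie monomial in `FL`. -/
def magmaToLie : FreeMagma (Fin 2) → FL
  | .of i => FreeLieAlgebra.of ℂ i
  | .mul t u => ⁅magmaToLie t, magmaToLie u⁆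

/-- The homogeneous component `L_j`: the span of the Lie monomials of degree `j`. -/
def homog (j : ℕ) : Submodule ℂ FL :=
  Submodule.span ℂ (magmaToLie '' {t | t.length = j})

/-- The weight space `L_j^w`: the eigenspace of the `h`-action on `L_j`
with eigenvalue `w`. -/
def wtsp (H : LieDerivation ℂ FL FL) (j : ℕ) (w : ℤ) : Submodule ℂ FL :=
  homog j ⊓ Module.End.eigenspace (H.toLinearMap) (w : ℂ)

/-- The space of Lie invariants of degree `j`: elements of `L_j` annihilated by every
element of sl₂(ℂ), equivalently by the actions of the basis elements x, h, y. -/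
def invariants (X H Y : LieDerivation ℂ FL FL) (j : ℕ) : Submodule ℂ FL :=
  homog j ⊓ LinearMap.ker X.toLinearMap ⊓ LinearMap.ker H.toLinearMap ⊓
    LinearMap.ker Y.toLinearMap

/-- The Lie subalgebra of `FL` generated by the invariants of degree `< j`.
An invariant of degree `j` is primitive iff it does not belong to this subalgebra. -/
def lowerInv (X H Y : LieDerivation ℂ FL FL) (j : ℕ) : LieSubalgebra ℂ FL :=
  LieSubalgebra.lieSpan ℂ FL (⋃ i < j, (invariants X H Y i : Set FL))

/-! ### Auxiliary definitions for the proof -/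

namespace InvAux

/-- `Q = ⁅b, a⁆`, the degree-2 invariant. -/
def Q : FL := ⁅genB, genA⁆
/-- `U = ⁅a, Q⁆`, degree 3. -/
def U : FL := ⁅genA, Q⁆
/-- `V = ⁅b, Q⁆`, degree 3. -/
def V : FL := ⁅genB, Q⁆
/-- basis monomials of degree 4 -/
def M1 : FL := ⁅genA, U⁆
def M2 : FL := ⁅genB, U⁆
def M3 : FL := ⁅genB, V⁆

lemma jacobiAV : ⁅genA, V⁆ = M2 := by
  rw [V, M2, leibniz_lie]
  have h1 : ⁅genA, genB⁆ = -Q := by rw [Q, ← lie_skew]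
  rw [h1, neg_lie, lie_self, neg_zero, zero_add, U]

lemma len_one {t : FreeMagma (Fin 2)} (h : t.length = 1) : ∃ i, t = FreeMagma.of i := by
  cases t with
  | of i => exact ⟨i, rfl⟩
  | mul u v =>
      exfalso
      have hu := u.length_pos
      have hv := v.length_pos
      have h' : u.length + v.length = 1 := h
      omega

lemma deg2 {t : FreeMagma (Fin 2)} (h : t.length = 2) :
    magmaToLie t ∈ Submodule.span ℂ {Q} := by
  cases t with
  | of i => exact absurd h (by simp [FreeMagma.length])
  | mul u v =>
      have h' : u.length + v.length = 2 := h
      have hu := u.length_pos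
      have hv := v.length_pos
      obtain ⟨i, rfl⟩ := len_one (t := u) (by omega)
      obtain ⟨j, rfl⟩ := len_one (t := v) (by omega)
      show ⁅FreeLieAlgebra.of ℂ i, FreeLieAlgebra.of ℂ j⁆ ∈ _
      fin_cases i <;> fin_cases j
      · show ⁅genA, genA⁆ ∈ _; rw [lie_self]; exact zero_mem _
      · show ⁅genA, genB⁆ ∈ _
        rw [show ⁅genA, genB⁆ = -Q by rw [Q, ← lie_skew]]
        exact neg_mem (Submodule.subset_span rfl)
      · exact Submodule.subset_span rfl
      · show ⁅genB, genB⁆ ∈ _; rw [lie_self]; exact zero_mem _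

lemma brack12 (i : Fin 2) {z : FL} (hz : z ∈ Submodule.span ℂ {Q}) :
    ⁅FreeLieAlgebra.of ℂ i, z⁆ ∈ Submodule.span ℂ ({U, V} : Set FL) := by
  obtain ⟨c, rfl⟩ := Submodule.mem_span_singleton.1 hz
  rw [lie_smul]
  fin_cases i
  · exact Submodule.smul_mem _ _ (Submodule.subset_span (Set.mem_insert _ _))
  · exact Submodule.smul_mem _ _
      (Submodule.subset_span (Set.mem_insert_of_mem _ rfl))

lemma deg3 {t : FreeMagma (Fin 2)} (h : t.length = 3) :
    magmaToLie t ∈ Submodule.span ℂ ({U, V} : Set FL) := by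
  cases t with
  | of i => exact absurd h (by simp [FreeMagma.length])
  | mul u v =>
      have h' : u.length + v.length = 3 := h
      have hu := u.length_pos
      have hv := v.length_pos
      show ⁅magmaToLie u, magmaToLie v⁆ ∈ _
      rcases (show u.length = 1 ∧ v.length = 2 ∨ u.length = 2 ∧ v.length = 1 by omega) with
        ⟨h1, h2⟩ | ⟨h1, h2⟩
      · obtain ⟨i, rfl⟩ := len_one h1
        exact brack12 i (deg2 h2)
      · obtain ⟨i, rfl⟩ := len_one h2
        rw [show ⁅magmaToLie u, magmaToLie (FreeMagma.of i)⁆ =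
            -⁅magmaToLie (FreeMagma.of i), magmaToLie u⁆ by rw [← lie_skew]]
        exact neg_mem (brack12 i (deg2 h1))

lemma brack13 (i : Fin 2) {z : FL} (hz : z ∈ Submodule.span ℂ ({U, V} : Set FL)) :
    ⁅FreeLieAlgebra.of ℂ i, z⁆ ∈ Submodule.span ℂ ({M1, M2, M3} : Set FL) := by
  obtain ⟨c, d, rfl⟩ := Submodule.mem_span_pair.1 hz
  rw [lie_add, lie_smul, lie_smul]
  fin_cases i
  · show c • ⁅genA, U⁆ + d • ⁅genA, V⁆ ∈ _
    rw [jacobiAV, show ⁅genA, U⁆ = M1 from rfl]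
    exact add_mem
      (Submodule.smul_mem _ _ (Submodule.subset_span (Set.mem_insert _ _)))
      (Submodule.smul_mem _ _ (Submodule.subset_span
        (Set.mem_insert_of_mem _ (Set.mem_insert _ _))))
  · show c • ⁅genB, U⁆ + d • ⁅genB, V⁆ ∈ _
    rw [show ⁅genB, U⁆ = M2 from rfl, show ⁅genB, V⁆ = M3 from rfl]
    exact add_mem
      (Submodule.smul_mem _ _ (Submodule.subset_span
        (Set.mem_insert_of_mem _ (Set.mem_insert _ _))))
      (Submodule.smul_mem _ _ (Submodule.subset_span
        (Set.mem_insert_of_mem _ (Set.mem_insert_of_mem _ rfl))))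

lemma deg4 {t : FreeMagma (Fin 2)} (h : t.length = 4) :
    magmaToLie t ∈ Submodule.span ℂ ({M1, M2, M3} : Set FL) := by
  cases t with
  | of i => exact absurd h (by simp [FreeMagma.length])
  | mul u v =>
      have h' : u.length + v.length = 4 := h
      have hu := u.length_pos
      have hv := v.length_pos
      show ⁅magmaToLie u, magmaToLie v⁆ ∈ _
      rcases (show u.length = 1 ∧ v.length = 3 ∨ u.length = 2 ∧ v.length = 2 ∨
          u.length = 3 ∧ v.length = 1 by omega) with
        ⟨h1, h2⟩ | ⟨h1, h2⟩ | ⟨h1, h2⟩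
      · obtain ⟨i, rfl⟩ := len_one h1
        exact brack13 i (deg3 h2)
      · obtain ⟨c, hc⟩ := Submodule.mem_span_singleton.1 (deg2 h1)
        obtain ⟨d, hd⟩ := Submodule.mem_span_singleton.1 (deg2 h2)
        rw [← hc, ← hd, smul_lie, lie_smul, lie_self, smul_zero, smul_zero]
        exact zero_mem _
      · obtain ⟨i, rfl⟩ := len_one h2
        rw [show ⁅magmaToLie u, magmaToLie (FreeMagma.of i)⁆ =
            -⁅magmaToLie (FreeMagma.of i), magmaToLie u⁆ by rw [← lie_skew]]
        exact neg_mem (brack13 i (deg3 h1))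

/-! ### A concrete matrix representation, used to establish linear independence -/

abbrev M3x3 := Matrix (Fin 3) (Fin 3) ℂ

attribute [local instance] LieRing.ofAssociativeRing

def Mm : M3x3 := !![1,1,0;1,1,1;1,1,1]
def Nm : M3x3 := !![0,0,1;0,0,1;0,1,0]

def φ : FL →ₗ⁅ℂ⁆ M3x3 := FreeLieAlgebra.lift ℂ ![Mm, Nm]

lemma φA : φ genA = Mm := by
  rw [genA, φ, FreeLieAlgebra.lift_of_apply]; rfl

lemma φB : φ genB = Nm := by
  rw [genB, φ, FreeLieAlgebra.lift_of_apply]; rfl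

lemma mQ : ⁅Nm, Mm⁆ = (!![1,1,-1;1,0,-1;1,0,-1] : M3x3) := by
  rw [Ring.lie_def, Mm, Nm]
  norm_num [Matrix.mul_fin_three, Matrix.empty_eq]

lemma mU : ⁅Mm, (!![1,1,-1;1,0,-1;1,0,-1] : M3x3)⁆ = (!![1,0,-2;3,1,-2;3,1,-2] : M3x3) := by
  rw [Ring.lie_def, Mm]
  norm_num [Matrix.mul_fin_three, Matrix.empty_eq]

lemma mV : ⁅Nm, (!![1,1,-1;1,0,-1;1,0,-1] : M3x3)⁆ = (!![1,1,-3;1,1,-2;1,1,-2] : M3x3) := by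
  rw [Ring.lie_def, Nm]
  norm_num [Matrix.mul_fin_three, Matrix.empty_eq]

lemma mA1 : ⁅Mm, (!![1,0,-2;3,1,-2;3,1,-2] : M3x3)⁆ = (!![5,2,-2;5,0,-5;5,0,-5] : M3x3) := by
  rw [Ring.lie_def, Mm]
  norm_num [Matrix.mul_fin_three, Matrix.empty_eq]

lemma mA2 : ⁅Nm, (!![1,0,-2;3,1,-2;3,1,-2] : M3x3)⁆ = (!![3,3,-3;3,3,-6;3,3,-6] : M3x3) := by
  rw [Ring.lie_def, Nm]
  norm_num [Matrix.mul_fin_three, Matrix.empty_eq]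

lemma mA3 : ⁅Nm, (!![1,1,-3;1,1,-2;1,1,-2] : M3x3)⁆ = (!![1,4,-4;1,3,-4;1,3,-4] : M3x3) := by
  rw [Ring.lie_def, Nm]
  norm_num [Matrix.mul_fin_three, Matrix.empty_eq]

lemma φQ : φ Q = (!![1,1,-1;1,0,-1;1,0,-1] : M3x3) := by
  rw [Q, LieHom.map_lie, φA, φB, mQ]

lemma φU : φ U = (!![1,0,-2;3,1,-2;3,1,-2] : M3x3) := by
  rw [U, LieHom.map_lie, φA, φQ, mU]

lemma φV : φ V = (!![1,1,-3;1,1,-2;1,1,-2] : M3x3) := by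
  rw [V, LieHom.map_lie, φB, φQ, mV]

lemma φM1 : φ M1 = (!![5,2,-2;5,0,-5;5,0,-5] : M3x3) := by
  rw [M1, LieHom.map_lie, φA, φU, mA1]

lemma φM2 : φ M2 = (!![3,3,-3;3,3,-6;3,3,-6] : M3x3) := by
  rw [M2, LieHom.map_lie, φB, φU, mA2]

lemma φM3 : φ M3 = (!![1,4,-4;1,3,-4;1,3,-4] : M3x3) := by
  rw [M3, LieHom.map_lie, φB, φV, mA3]

lemma Q_ne_zero : Q ≠ 0 := by
  intro h
  have h2 : φ Q = 0 := by rw [h, map_zero φ]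
  rw [φQ] at h2
  have h3 := congrFun (congrFun h2 0) 0
  norm_num at h3

lemma indep {c d e : ℂ} (h : c • M1 + d • M2 + e • M3 = 0) : c = 0 ∧ d = 0 ∧ e = 0 := by
  have h' : c • φ M1 + d • φ M2 + e • φ M3 = 0 := by
    rw [← map_smul φ, ← map_smul φ, ← map_smul φ, ← map_add φ, ← map_add φ, h, map_zero φ]
  rw [φM1, φM2, φM3] at h'
  have h1 := congrFun (congrFun h' 0) 0
  have h2 := congrFun (congrFun h' 0) 1
  have h3 := congrFun (congrFun h' 1) 2
  simp [Matrix.add_apply, Matrix.smul_apply] at h1 h2 h3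
  refine ⟨?_, ?_, ?_⟩
  · linear_combination (4/9 : ℂ) * h1 + (2/9 : ℂ) * h2 + (1/3 : ℂ) * h3
  · linear_combination (-4/9 : ℂ) * h1 + (-5/9 : ℂ) * h2 + (-2/3 : ℂ) * h3
  · linear_combination (1/9 : ℂ) * h1 + (5/9 : ℂ) * h2 + (1/3 : ℂ) * h3

end InvAux

open InvAux

/-- For the natural representation of sl₂(ℂ) on the free Lie algebra on `a, b`:
the space of Lie invariants of degree 2 is one-dimensional, spanned by `[b,a]`,
and the space of Lie invariants of degree 4 is zero. -/
theorem invariants_degree_two_and_four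
    (X H Y : LieDerivation ℂ FL FL)
    (hXa : X genA = 0) (hXb : X genB = genA)
    (hHa : H genA = genA) (hHb : H genB = -genB)
    (hYa : Y genA = genB) (hYb : Y genB = 0) :
    invariants X H Y 2 = Submodule.span ℂ {⁅genB, genA⁆} ∧ ⁅genB, genA⁆ ≠ (0 : FL) ∧
    invariants X H Y 4 = ⊥ := by
  -- values of the derivations
  have hXQ : X Q = 0 := by
    rw [Q, LieDerivation.apply_lie_eq_add, hXa, hXb, lie_zero, lie_self, add_zero]
  have hHQ : H Q = 0 := by
    rw [Q, LieDerivation.apply_lie_eq_add, hHa, hHb, neg_lie]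
    exact add_neg_cancel _
  have hYQ : Y Q = 0 := by
    rw [Q, LieDerivation.apply_lie_eq_add, hYa, hYb, zero_lie, lie_self, zero_add]
  have hXU : X U = 0 := by
    rw [U, LieDerivation.apply_lie_eq_add, hXa, hXQ, lie_zero, zero_lie, add_zero]
  have hXV : X V = U := by
    rw [V, LieDerivation.apply_lie_eq_add, hXb, hXQ, lie_zero, zero_add, U]
  have hYU : Y U = V := by
    rw [U, LieDerivation.apply_lie_eq_add, hYa, hYQ, lie_zero, zero_add, V]
  have hYV : Y V = 0 := by
    rw [V, LieDerivation.apply_lie_eq_add, hYb, hYQ, lie_zero, zero_lie, add_zero]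
  have hXM1 : X M1 = 0 := by
    rw [M1, LieDerivation.apply_lie_eq_add, hXa, hXU, lie_zero, zero_lie, add_zero]
  have hXM2 : X M2 = M1 := by
    rw [M2, LieDerivation.apply_lie_eq_add, hXb, hXU, lie_zero, zero_add, M1]
  have hXM3 : X M3 = M2 + M2 := by
    rw [M3, LieDerivation.apply_lie_eq_add, hXb, hXV, jacobiAV]
    rw [show ⁅genB, U⁆ = M2 from rfl]
  have hYM1 : Y M1 = M2 + M2 := by
    rw [M1, LieDerivation.apply_lie_eq_add, hYa, hYU, jacobiAV]
    rw [show ⁅genB, U⁆ = M2 from rfl]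
  have hYM2 : Y M2 = M3 := by
    rw [M2, LieDerivation.apply_lie_eq_add, hYb, hYU, zero_lie, add_zero]
    rfl
  have hYM3 : Y M3 = 0 := by
    rw [M3, LieDerivation.apply_lie_eq_add, hYb, hYV, lie_zero, zero_lie, add_zero]
  have hQhomog : Q ∈ homog 2 :=
    Submodule.subset_span ⟨FreeMagma.mul (.of 1) (.of 0), rfl, rfl⟩
  refine ⟨?_, Q_ne_zero, ?_⟩
  · -- degree 2
    apply le_antisymm
    · intro x hx
      have hx' : x ∈ homog 2 := hx.1.1.1
      exact Submodule.span_le.2 (by rintro _ ⟨t, ht, rfl⟩; exact deg2 ht) hx'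
    · rw [Submodule.span_le, Set.singleton_subset_iff]
      exact ⟨⟨⟨hQhomog, LinearMap.mem_ker.2 hXQ⟩, LinearMap.mem_ker.2 hHQ⟩,
        LinearMap.mem_ker.2 hYQ⟩
  · -- degree 4
    rw [eq_bot_iff]
    intro x hx
    have hx4 : x ∈ homog 4 := hx.1.1.1
    have hXx : X x = 0 := hx.1.1.2
    have hYx : Y x = 0 := hx.2
    have hxW : x ∈ Submodule.span ℂ ({M1, M2, M3} : Set FL) :=
      Submodule.span_le.2 (by rintro _ ⟨t, ht, rfl⟩; exact deg4 ht) hx4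
    obtain ⟨c, z, hz, rfl⟩ := Submodule.mem_span_insert.1 hxW
    obtain ⟨d, e, rfl⟩ := Submodule.mem_span_pair.1 hz
    have eX : d • M1 + (2 * e) • M2 + (0 : ℂ) • M3 = 0 := by
      rw [← hXx, map_add, map_add, map_smul, map_smul, map_smul, hXM1, hXM2, hXM3]
      module
    have eY : (0 : ℂ) • M1 + (2 * c) • M2 + d • M3 = 0 := by
      rw [← hYx, map_add, map_add, map_smul, map_smul, map_smul, hYM1, hYM2, hYM3]
      module
    obtain ⟨hd, he2, -⟩ := indep eX
    obtain ⟨-, hc2, -⟩ := indep eY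
    have hc : c = 0 := by linear_combination hc2 / 2
    have he : e = 0 := by linear_combination he2 / 2
    rw [hc, hd, he]
    simp
end
end

section
/- For the natural representation of sl₂(ℂ) on the free Lie algebra L on a, b, the space of Lie invariants of degree 6 is one-dimensional, spanned by I₆ = [[[b,a],b],[[b,a],a]]. -/
/-!
Setting: the free Lie algebra `FL` over ℂ on two generators `a < b`, with the simple
Lie algebra sl₂(ℂ) (standard basis x, h, y, with ⁅h,x⁆ = 2x, ⁅h,y⁆ = −2y, ⁅x,y⁆ = h)
acting on `FL` by derivations extending its natural representation on the span of the
generators:  x.a = 0, x.b = a, h.a = a, h.b = −b, y.a = b, y.b = 0.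
The derivations `X H Y` realizing these actions are uniquely determined by their values
on the generators, so we quantify over derivations with the prescribed generator values.
-/

noncomputable section

/-- `[b,a]` -/
def ba : FL := ⁅genB, genA⁆
/-- `[[b,a],a]` -/
def baa : FL := ⁅ba, genA⁆
/-- `[[b,a],b]` -/
def bab : FL := ⁅ba, genB⁆
/-- `[[[b,a],a],a]` -/
def baaa : FL := ⁅baa, genA⁆
/-- `[[[b,a],a],b]` -/
def baab : FL := ⁅baa, genB⁆
/-- `[[[b,a],b],b]` -/
def babb : FL := ⁅bab, genB⁆

/-- `I₆ = [[[b,a],b],[[b,a],a]]` -/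
def I6 : FL := ⁅bab, baa⁆

/-! ### Auxiliary definitions -/

/-- degree-5 elements -/
def d1 : FL := ⁅baaa, genA⁆
def d2 : FL := ⁅baaa, genB⁆
def d3 : FL := ⁅baab, genB⁆
def d4 : FL := ⁅babb, genB⁆
def d5 : FL := ⁅ba, baa⁆
def d6 : FL := ⁅ba, bab⁆

/-- degree-6 elements -/
def u1 : FL := ⁅d1, genA⁆
def u2 : FL := ⁅d1, genB⁆
def u3 : FL := ⁅d2, genB⁆
def u4 : FL := ⁅d3, genB⁆
def u5 : FL := ⁅d4, genB⁆
def u6 : FL := ⁅ba, baaa⁆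
def u7 : FL := ⁅ba, baab⁆
def u8 : FL := ⁅ba, babb⁆

instance : DecidableEq (FreeMonoid (Fin 2)) := inferInstanceAs (DecidableEq (List (Fin 2)))

abbrev AA : Type := MonoidAlgebra ℂ (FreeMonoid (Fin 2))

attribute [local instance 100] LieRing.ofAssociativeRing

def ψ : FL →ₗ⁅ℂ⁆ AA := FreeLieAlgebra.lift ℂ fun i => MonoidAlgebra.single (FreeMonoid.ofList [i]) 1

def ev (w : FreeMonoid (Fin 2)) : AA →ₗ[ℂ] ℂ :=
  Finsupp.lapply w ∘ₗ (MonoidAlgebra.coeffLinearEquiv ℂ).toLinearMap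

@[simp] lemma ev_single (w w' : FreeMonoid (Fin 2)) (c : ℂ) :
    ev w (MonoidAlgebra.single w' c) = if w' = w then c else 0 := by
  simp only [ev, LinearMap.comp_apply]; exact Finsupp.single_apply

/-! ### Folding lemmas (all definitional) -/

lemma fold1 : ⁅genB, genA⁆ = ba := rfl
lemma fold2 : ⁅ba, genA⁆ = baa := rfl
lemma fold3 : ⁅ba, genB⁆ = bab := rfl
lemma fold4 : ⁅baa, genA⁆ = baaa := rfl
lemma fold5 : ⁅baa, genB⁆ = baab := rfl
lemma fold6 : ⁅bab, genB⁆ = babb := rfl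
lemma fold7 : ⁅baaa, genA⁆ = d1 := rfl
lemma fold8 : ⁅baaa, genB⁆ = d2 := rfl
lemma fold9 : ⁅baab, genB⁆ = d3 := rfl
lemma fold10 : ⁅babb, genB⁆ = d4 := rfl
lemma fold11 : ⁅ba, baa⁆ = d5 := rfl
lemma fold12 : ⁅ba, bab⁆ = d6 := rfl
lemma fold13 : ⁅d1, genA⁆ = u1 := rfl
lemma fold14 : ⁅d1, genB⁆ = u2 := rfl
lemma fold15 : ⁅d2, genB⁆ = u3 := rfl
lemma fold16 : ⁅d3, genB⁆ = u4 := rfl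
lemma fold17 : ⁅d4, genB⁆ = u5 := rfl
lemma fold18 : ⁅ba, baaa⁆ = u6 := rfl
lemma fold19 : ⁅ba, baab⁆ = u7 := rfl
lemma fold20 : ⁅ba, babb⁆ = u8 := rfl
lemma fold21 : ⁅bab, baa⁆ = I6 := rfl

/-! ### Jacobi-identity computations -/

lemma jac (u v w : FL) : ⁅⁅u, v⁆, w⁆ = ⁅⁅u, w⁆, v⁆ + ⁅u, ⁅v, w⁆⁆ := by
  rw [lie_lie, ← lie_skew (x := ⁅u, w⁆) (y := v)]; abel

lemma L41 : ⁅bab, genA⁆ = baab := by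
  rw [show bab = ⁅ba, genB⁆ from rfl, jac, fold1, fold2, fold5, lie_self, add_zero]

lemma L51 : ⁅baab, genA⁆ = d2 - d5 := by
  rw [show baab = ⁅baa, genB⁆ from rfl, jac, fold1, fold4, fold8,
    ← lie_skew (x := baa) (y := ba), fold11]
  module

lemma L52 : ⁅babb, genA⁆ = d3 - d6 := by
  rw [show babb = ⁅bab, genB⁆ from rfl, jac, fold1, L41, fold9,
    ← lie_skew (x := bab) (y := ba), fold12]
  module

lemma L61 : ⁅d2, genA⁆ = u2 - u6 := by
  rw [show d2 = ⁅baaa, genB⁆ from rfl, jac, fold1, fold7, fold14,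
    ← lie_skew (x := baaa) (y := ba), fold18]
  module

lemma L64 : ⁅d5, genA⁆ = u6 := by
  rw [show d5 = ⁅ba, baa⁆ from rfl, jac, fold2, fold4, fold18, lie_self, zero_add]

lemma L65 : ⁅d5, genB⁆ = I6 + u7 := by
  rw [show d5 = ⁅ba, baa⁆ from rfl, jac, fold3, fold5, fold21, fold19]

lemma L66 : ⁅d6, genA⁆ = u7 - I6 := by
  rw [show d6 = ⁅ba, bab⁆ from rfl, jac, fold2, L41, fold19,
    ← lie_skew (x := baa) (y := bab), fold21]
  module

lemma L67 : ⁅d6, genB⁆ = u8 := by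
  rw [show d6 = ⁅ba, bab⁆ from rfl, jac, fold3, fold6, fold20, lie_self, zero_add]

lemma L62 : ⁅d3, genA⁆ = u3 - (2 : ℂ) • u7 - I6 := by
  rw [show d3 = ⁅baab, genB⁆ from rfl, jac, fold1, L51, sub_lie, fold15, L65,
    ← lie_skew (x := baab) (y := ba), fold19]
  module

lemma L63 : ⁅d4, genA⁆ = u4 - (2 : ℂ) • u8 := by
  rw [show d4 = ⁅babb, genB⁆ from rfl, jac, fold1, L52, sub_lie, fold16, L67,
    ← lie_skew (x := babb) (y := ba), fold20]
  module
/-! ### Derivation computations -/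

section XDer
variable (X : LieDerivation ℂ FL FL) (hXa : X genA = 0) (hXb : X genB = genA)
include hXa hXb

lemma X_ba : X ba = 0 := by
  rw [show ba = ⁅genB, genA⁆ from rfl, X.apply_lie_eq_add, hXa, hXb]
  simp

lemma X_baa : X baa = 0 := by
  rw [show baa = ⁅ba, genA⁆ from rfl, X.apply_lie_eq_add, X_ba X hXa hXb, hXa]
  simp

lemma X_bab : X bab = baa := by
  rw [show bab = ⁅ba, genB⁆ from rfl, X.apply_lie_eq_add, X_ba X hXa hXb, hXb, fold2]
  simp

lemma X_baaa : X baaa = 0 := by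
  rw [show baaa = ⁅baa, genA⁆ from rfl, X.apply_lie_eq_add, X_baa X hXa hXb, hXa]
  simp

lemma X_baab : X baab = baaa := by
  rw [show baab = ⁅baa, genB⁆ from rfl, X.apply_lie_eq_add, X_baa X hXa hXb, hXb, fold4]
  simp

lemma X_d2 : X d2 = d1 := by
  rw [show d2 = ⁅baaa, genB⁆ from rfl, X.apply_lie_eq_add, X_baaa X hXa hXb, hXb, fold7]
  simp

lemma X_u3 : X u3 = (2 : ℂ) • u2 - u6 := by
  rw [show u3 = ⁅d2, genB⁆ from rfl, X.apply_lie_eq_add, X_d2 X hXa hXb, hXb, fold14, L61]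
  module

lemma X_u7 : X u7 = u6 := by
  rw [show u7 = ⁅ba, baab⁆ from rfl, X.apply_lie_eq_add, X_ba X hXa hXb,
    X_baab X hXa hXb, fold18]
  simp

lemma X_I6 : X I6 = 0 := by
  rw [show I6 = ⁅bab, baa⁆ from rfl, X.apply_lie_eq_add, X_bab X hXa hXb, X_baa X hXa hXb]
  simp

end XDer

section HDer
variable (H : LieDerivation ℂ FL FL) (hHa : H genA = genA) (hHb : H genB = -genB)
include hHa hHb

lemma H_ba : H ba = 0 := by
  rw [show ba = ⁅genB, genA⁆ from rfl, H.apply_lie_eq_add, hHa, hHb]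
  simp only [neg_lie]
  abel

lemma H_baa : H baa = baa := by
  rw [show baa = ⁅ba, genA⁆ from rfl, H.apply_lie_eq_add, H_ba H hHa hHb, hHa, fold2]
  simp

lemma H_bab : H bab = -bab := by
  rw [show bab = ⁅ba, genB⁆ from rfl, H.apply_lie_eq_add, H_ba H hHa hHb, hHb]
  simp only [zero_lie, lie_neg, fold3, zero_add, lie_zero, add_zero]

lemma H_baaa : H baaa = (2 : ℂ) • baaa := by
  rw [show baaa = ⁅baa, genA⁆ from rfl, H.apply_lie_eq_add, H_baa H hHa hHb, hHa, fold4]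
  module

lemma H_baab : H baab = 0 := by
  rw [show baab = ⁅baa, genB⁆ from rfl, H.apply_lie_eq_add, H_baa H hHa hHb, hHb]
  simp only [lie_neg, fold5]
  module

lemma H_babb : H babb = (-2 : ℂ) • babb := by
  rw [show babb = ⁅bab, genB⁆ from rfl, H.apply_lie_eq_add, H_bab H hHa hHb, hHb]
  simp only [neg_lie, lie_neg, fold6]
  module

lemma H_d1 : H d1 = (3 : ℂ) • d1 := by
  rw [show d1 = ⁅baaa, genA⁆ from rfl, H.apply_lie_eq_add, H_baaa H hHa hHb, hHa]
  simp only [smul_lie, fold7]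
  module

lemma H_d2 : H d2 = d2 := by
  rw [show d2 = ⁅baaa, genB⁆ from rfl, H.apply_lie_eq_add, H_baaa H hHa hHb, hHb]
  simp only [smul_lie, lie_neg, fold8]
  module

lemma H_d3 : H d3 = -d3 := by
  rw [show d3 = ⁅baab, genB⁆ from rfl, H.apply_lie_eq_add, H_baab H hHa hHb, hHb]
  simp only [zero_lie, lie_neg, fold9, zero_add, lie_zero, add_zero]

lemma H_d4 : H d4 = (-3 : ℂ) • d4 := by
  rw [show d4 = ⁅babb, genB⁆ from rfl, H.apply_lie_eq_add, H_babb H hHa hHb, hHb]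
  simp only [smul_lie, lie_neg, fold10]
  module

lemma H_d5 : H d5 = d5 := by
  rw [show d5 = ⁅ba, baa⁆ from rfl, H.apply_lie_eq_add, H_ba H hHa hHb, H_baa H hHa hHb,
    fold11]
  simp

lemma H_d6 : H d6 = -d6 := by
  rw [show d6 = ⁅ba, bab⁆ from rfl, H.apply_lie_eq_add, H_ba H hHa hHb, H_bab H hHa hHb]
  simp only [zero_lie, lie_neg, fold12, zero_add, lie_zero, add_zero]

lemma H_u1 : H u1 = (4 : ℂ) • u1 := by
  rw [show u1 = ⁅d1, genA⁆ from rfl, H.apply_lie_eq_add, H_d1 H hHa hHb, hHa]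
  simp only [smul_lie, fold13]
  module

lemma H_u2 : H u2 = (2 : ℂ) • u2 := by
  rw [show u2 = ⁅d1, genB⁆ from rfl, H.apply_lie_eq_add, H_d1 H hHa hHb, hHb]
  simp only [smul_lie, lie_neg, fold14]
  module

lemma H_u3 : H u3 = 0 := by
  rw [show u3 = ⁅d2, genB⁆ from rfl, H.apply_lie_eq_add, H_d2 H hHa hHb, hHb]
  simp only [lie_neg, fold15]
  module

lemma H_u4 : H u4 = (-2 : ℂ) • u4 := by
  rw [show u4 = ⁅d3, genB⁆ from rfl, H.apply_lie_eq_add, H_d3 H hHa hHb, hHb]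
  simp only [neg_lie, lie_neg, fold16]
  module

lemma H_u5 : H u5 = (-4 : ℂ) • u5 := by
  rw [show u5 = ⁅d4, genB⁆ from rfl, H.apply_lie_eq_add, H_d4 H hHa hHb, hHb]
  simp only [smul_lie, lie_neg, fold17]
  module

lemma H_u6 : H u6 = (2 : ℂ) • u6 := by
  rw [show u6 = ⁅ba, baaa⁆ from rfl, H.apply_lie_eq_add, H_ba H hHa hHb, H_baaa H hHa hHb]
  simp only [zero_lie, lie_smul, fold18, zero_add, lie_zero, add_zero]

lemma H_u7 : H u7 = 0 := by
  rw [show u7 = ⁅ba, baab⁆ from rfl, H.apply_lie_eq_add, H_ba H hHa hHb, H_baab H hHa hHb]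
  simp

lemma H_u8 : H u8 = (-2 : ℂ) • u8 := by
  rw [show u8 = ⁅ba, babb⁆ from rfl, H.apply_lie_eq_add, H_ba H hHa hHb, H_babb H hHa hHb]
  simp only [zero_lie, lie_smul, fold20, zero_add, lie_zero, add_zero]

lemma H_I6 : H I6 = 0 := by
  rw [show I6 = ⁅bab, baa⁆ from rfl, H.apply_lie_eq_add, H_bab H hHa hHb, H_baa H hHa hHb]
  simp only [neg_lie, fold21]
  module

end HDer

section YDer
variable (Y : LieDerivation ℂ FL FL) (hYa : Y genA = genB) (hYb : Y genB = 0)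
include hYa hYb

lemma Y_ba : Y ba = 0 := by
  rw [show ba = ⁅genB, genA⁆ from rfl, Y.apply_lie_eq_add, hYa, hYb]
  simp

lemma Y_baa : Y baa = bab := by
  rw [show baa = ⁅ba, genA⁆ from rfl, Y.apply_lie_eq_add, Y_ba Y hYa hYb, hYa, fold3]
  simp

lemma Y_bab : Y bab = 0 := by
  rw [show bab = ⁅ba, genB⁆ from rfl, Y.apply_lie_eq_add, Y_ba Y hYa hYb, hYb]
  simp

lemma Y_I6 : Y I6 = 0 := by
  rw [show I6 = ⁅bab, baa⁆ from rfl, Y.apply_lie_eq_add, Y_bab Y hYa hYb, Y_baa Y hYa hYb]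
  simp

end YDer
/-! ### Spanning sets -/

def tvec : Fin 9 → FL := ![u1, u2, u3, u4, u5, u6, u7, u8, I6]

def S1 : Submodule ℂ FL := Submodule.span ℂ {genA, genB}
def S2 : Submodule ℂ FL := Submodule.span ℂ {ba}
def S3 : Submodule ℂ FL := Submodule.span ℂ {baa, bab}
def S4 : Submodule ℂ FL := Submodule.span ℂ {baaa, baab, babb}
def S5 : Submodule ℂ FL := Submodule.span ℂ {d1, d2, d3, d4, d5, d6}
def S6 : Submodule ℂ FL := Submodule.span ℂ (Set.range tvec)

lemma hu1 : u1 ∈ S6 := Submodule.subset_span ⟨0, rfl⟩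
lemma hu2 : u2 ∈ S6 := Submodule.subset_span ⟨1, rfl⟩
lemma hu3 : u3 ∈ S6 := Submodule.subset_span ⟨2, rfl⟩
lemma hu4 : u4 ∈ S6 := Submodule.subset_span ⟨3, rfl⟩
lemma hu5 : u5 ∈ S6 := Submodule.subset_span ⟨4, rfl⟩
lemma hu6 : u6 ∈ S6 := Submodule.subset_span ⟨5, rfl⟩
lemma hu7 : u7 ∈ S6 := Submodule.subset_span ⟨6, rfl⟩
lemma hu8 : u8 ∈ S6 := Submodule.subset_span ⟨7, rfl⟩
lemma hu9 : I6 ∈ S6 := Submodule.subset_span ⟨8, rfl⟩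

lemma lie_mem_span {P : Submodule ℂ FL} {S T : Set FL}
    (h : ∀ s ∈ S, ∀ t ∈ T, ⁅s, t⁆ ∈ P) {u v : FL}
    (hu : u ∈ Submodule.span ℂ S) (hv : v ∈ Submodule.span ℂ T) : ⁅u, v⁆ ∈ P := by
  induction hu using Submodule.span_induction with
  | mem s hs =>
    induction hv using Submodule.span_induction with
    | mem t ht => exact h s hs t ht
    | zero => rw [lie_zero]; exact P.zero_mem
    | add x y hx hy px py => rw [lie_add]; exact P.add_mem px py
    | smul r x hx px => rw [lie_smul]; exact P.smul_mem r px
  | zero => rw [zero_lie]; exact P.zero_mem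
  | add x y hx hy px py => rw [add_lie]; exact P.add_mem px py
  | smul r x hx px => rw [smul_lie]; exact P.smul_mem r px

lemma swap_brk {P : Submodule ℂ FL} {S T : Set FL}
    (h : ∀ s ∈ S, ∀ t ∈ T, ⁅s, t⁆ ∈ P) : ∀ t ∈ T, ∀ s ∈ S, ⁅t, s⁆ ∈ P := by
  intro t ht s hs
  rw [← lie_skew]
  exact P.neg_mem (h s hs t ht)

lemma brk11 : ∀ s ∈ ({genA, genB} : Set FL), ∀ t ∈ ({genA, genB} : Set FL), ⁅s, t⁆ ∈ S2 := by
  rintro s (rfl | rfl) t (rfl | rfl)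
  · rw [lie_self]; exact S2.zero_mem
  · rw [← lie_skew, fold1]; exact S2.neg_mem (Submodule.subset_span rfl)
  · rw [fold1]; exact Submodule.subset_span rfl
  · rw [lie_self]; exact S2.zero_mem

lemma brk21 : ∀ s ∈ ({ba} : Set FL), ∀ t ∈ ({genA, genB} : Set FL), ⁅s, t⁆ ∈ S3 := by
  rintro s rfl t (rfl | rfl)
  · rw [fold2]; exact Submodule.subset_span (by left; rfl)
  · rw [fold3]; exact Submodule.subset_span (by right; rfl)

lemma brk31 : ∀ s ∈ ({baa, bab} : Set FL), ∀ t ∈ ({genA, genB} : Set FL), ⁅s, t⁆ ∈ S4 := by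
  rintro s (rfl | rfl) t (rfl | rfl)
  · rw [fold4]; exact Submodule.subset_span (by left; rfl)
  · rw [fold5]; exact Submodule.subset_span (by right; left; rfl)
  · rw [L41]; exact Submodule.subset_span (by right; left; rfl)
  · rw [fold6]; exact Submodule.subset_span (by right; right; rfl)

lemma brk22 : ∀ s ∈ ({ba} : Set FL), ∀ t ∈ ({ba} : Set FL), ⁅s, t⁆ ∈ S4 := by
  rintro s rfl t rfl
  rw [lie_self]; exact S4.zero_mem

lemma brk41 : ∀ s ∈ ({baaa, baab, babb} : Set FL), ∀ t ∈ ({genA, genB} : Set FL),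
    ⁅s, t⁆ ∈ S5 := by
  have m1 : d1 ∈ S5 := Submodule.subset_span (by left; rfl)
  have m2 : d2 ∈ S5 := Submodule.subset_span (by right; left; rfl)
  have m3 : d3 ∈ S5 := Submodule.subset_span (by right; right; left; rfl)
  have m4 : d4 ∈ S5 := Submodule.subset_span (by right; right; right; left; rfl)
  have m5 : d5 ∈ S5 := Submodule.subset_span (by right; right; right; right; left; rfl)
  have m6 : d6 ∈ S5 := Submodule.subset_span (by right; right; right; right; right; rfl)
  rintro s (rfl | rfl | rfl) t (rfl | rfl)
  · rw [fold7]; exact m1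
  · rw [fold8]; exact m2
  · rw [L51]; exact S5.sub_mem m2 m5
  · rw [fold9]; exact m3
  · rw [L52]; exact S5.sub_mem m3 m6
  · rw [fold10]; exact m4

lemma brk23 : ∀ s ∈ ({ba} : Set FL), ∀ t ∈ ({baa, bab} : Set FL), ⁅s, t⁆ ∈ S5 := by
  rintro s rfl t (rfl | rfl)
  · rw [fold11]; exact Submodule.subset_span (by right; right; right; right; left; rfl)
  · rw [fold12]; exact Submodule.subset_span (by right; right; right; right; right; rfl)

lemma brk51 : ∀ s ∈ ({d1, d2, d3, d4, d5, d6} : Set FL), ∀ t ∈ ({genA, genB} : Set FL),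
    ⁅s, t⁆ ∈ S6 := by
  rintro s (rfl | rfl | rfl | rfl | rfl | rfl) t (rfl | rfl)
  · rw [fold13]; exact hu1
  · rw [fold14]; exact hu2
  · rw [L61]; exact S6.sub_mem hu2 hu6
  · rw [fold15]; exact hu3
  · rw [L62]; exact S6.sub_mem (S6.sub_mem hu3 (S6.smul_mem _ hu7)) hu9
  · rw [fold16]; exact hu4
  · rw [L63]; exact S6.sub_mem hu4 (S6.smul_mem _ hu8)
  · rw [fold17]; exact hu5
  · rw [L64]; exact hu6
  · rw [L65]; exact S6.add_mem hu9 hu7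
  · rw [L66]; exact S6.sub_mem hu7 hu9
  · rw [L67]; exact hu8

lemma brk24 : ∀ s ∈ ({ba} : Set FL), ∀ t ∈ ({baaa, baab, babb} : Set FL), ⁅s, t⁆ ∈ S6 := by
  rintro s rfl t (rfl | rfl | rfl)
  · rw [fold18]; exact hu6
  · rw [fold19]; exact hu7
  · rw [fold20]; exact hu8

lemma brk33 : ∀ s ∈ ({baa, bab} : Set FL), ∀ t ∈ ({baa, bab} : Set FL), ⁅s, t⁆ ∈ S6 := by
  rintro s (rfl | rfl) t (rfl | rfl)
  · rw [lie_self]; exact S6.zero_mem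
  · rw [← lie_skew, fold21]; exact S6.neg_mem hu9
  · rw [fold21]; exact hu9
  · rw [lie_self]; exact S6.zero_mem

/-! ### Degree decomposition of Lie monomials -/

lemma mem_len1 {t : FreeMagma (Fin 2)} (h : t.length = 1) : magmaToLie t ∈ S1 := by
  cases t with
  | of i =>
    fin_cases i
    · exact Submodule.subset_span (by left; rfl)
    · exact Submodule.subset_span (by right; rfl)
  | mul u v =>
    have hu := u.length_pos; have hv := v.length_pos
    simp only [FreeMagma.length] at h; omega

lemma mem_len2 {t : FreeMagma (Fin 2)} (h : t.length = 2) : magmaToLie t ∈ S2 := by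
  cases t with
  | of i => simp [FreeMagma.length] at h
  | mul u v =>
    have hu := u.length_pos; have hv := v.length_pos
    simp only [FreeMagma.length] at h
    exact lie_mem_span brk11 (mem_len1 (by omega)) (mem_len1 (by omega))

lemma mem_len3 {t : FreeMagma (Fin 2)} (h : t.length = 3) : magmaToLie t ∈ S3 := by
  cases t with
  | of i => simp [FreeMagma.length] at h
  | mul u v =>
    have hu := u.length_pos; have hv := v.length_pos
    simp only [FreeMagma.length] at h
    rcases (by omega : u.length = 1 ∧ v.length = 2 ∨ u.length = 2 ∧ v.length = 1) with
      ⟨h1, h2⟩ | ⟨h1, h2⟩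
    · exact lie_mem_span (swap_brk brk21) (mem_len1 h1) (mem_len2 h2)
    · exact lie_mem_span brk21 (mem_len2 h1) (mem_len1 h2)

lemma mem_len4 {t : FreeMagma (Fin 2)} (h : t.length = 4) : magmaToLie t ∈ S4 := by
  cases t with
  | of i => simp [FreeMagma.length] at h
  | mul u v =>
    have hu := u.length_pos; have hv := v.length_pos
    simp only [FreeMagma.length] at h
    rcases (by omega : u.length = 1 ∧ v.length = 3 ∨ u.length = 2 ∧ v.length = 2 ∨
        u.length = 3 ∧ v.length = 1) with ⟨h1, h2⟩ | ⟨h1, h2⟩ | ⟨h1, h2⟩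
    · exact lie_mem_span (swap_brk brk31) (mem_len1 h1) (mem_len3 h2)
    · exact lie_mem_span brk22 (mem_len2 h1) (mem_len2 h2)
    · exact lie_mem_span brk31 (mem_len3 h1) (mem_len1 h2)

lemma mem_len5 {t : FreeMagma (Fin 2)} (h : t.length = 5) : magmaToLie t ∈ S5 := by
  cases t with
  | of i => simp [FreeMagma.length] at h
  | mul u v =>
    have hu := u.length_pos; have hv := v.length_pos
    simp only [FreeMagma.length] at h
    rcases (by omega : u.length = 1 ∧ v.length = 4 ∨ u.length = 2 ∧ v.length = 3 ∨
        u.length = 3 ∧ v.length = 2 ∨ u.length = 4 ∧ v.length = 1) with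
      ⟨h1, h2⟩ | ⟨h1, h2⟩ | ⟨h1, h2⟩ | ⟨h1, h2⟩
    · exact lie_mem_span (swap_brk brk41) (mem_len1 h1) (mem_len4 h2)
    · exact lie_mem_span brk23 (mem_len2 h1) (mem_len3 h2)
    · exact lie_mem_span (swap_brk brk23) (mem_len3 h1) (mem_len2 h2)
    · exact lie_mem_span brk41 (mem_len4 h1) (mem_len1 h2)

lemma mem_len6 {t : FreeMagma (Fin 2)} (h : t.length = 6) : magmaToLie t ∈ S6 := by
  cases t with
  | of i => simp [FreeMagma.length] at h
  | mul u v =>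
    have hu := u.length_pos; have hv := v.length_pos
    simp only [FreeMagma.length] at h
    rcases (by omega : u.length = 1 ∧ v.length = 5 ∨ u.length = 2 ∧ v.length = 4 ∨
        u.length = 3 ∧ v.length = 3 ∨ u.length = 4 ∧ v.length = 2 ∨
        u.length = 5 ∧ v.length = 1) with
      ⟨h1, h2⟩ | ⟨h1, h2⟩ | ⟨h1, h2⟩ | ⟨h1, h2⟩ | ⟨h1, h2⟩
    · exact lie_mem_span (swap_brk brk51) (mem_len1 h1) (mem_len5 h2)
    · exact lie_mem_span brk24 (mem_len2 h1) (mem_len4 h2)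
    · exact lie_mem_span brk33 (mem_len3 h1) (mem_len3 h2)
    · exact lie_mem_span (swap_brk brk24) (mem_len4 h1) (mem_len2 h2)
    · exact lie_mem_span brk51 (mem_len5 h1) (mem_len1 h2)

lemma homog6_le : homog 6 ≤ S6 := by
  rw [homog, Submodule.span_le]
  rintro x ⟨t, ht, rfl⟩
  exact mem_len6 ht
/-! ### Images in the free associative algebra -/

def sg (l : List (Fin 2)) : AA := MonoidAlgebra.single (FreeMonoid.ofList l) 1

lemma sg_mul (l1 l2 : List (Fin 2)) : sg l1 * sg l2 = sg (l1 ++ l2) := by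
  simp only [sg, MonoidAlgebra.single_mul_single, FreeMonoid.ofList_append, mul_one]

lemma psi_genA : ψ genA = sg [0] := by
  simp [ψ, genA, sg, FreeLieAlgebra.lift_of_apply]

lemma psi_genB : ψ genB = sg [1] := by
  simp [ψ, genB, sg, FreeLieAlgebra.lift_of_apply]
lemma psi_ba : ψ ba = (-1 : ℂ) • sg [0, 1] + (1 : ℂ) • sg [1, 0] := by
  rw [show ba = ⁅genB, genA⁆ from rfl, LieHom.map_lie, psi_genB, psi_genA, Ring.lie_def]
  simp only [sub_mul, mul_sub, add_mul, mul_add, smul_mul_assoc, mul_smul_comm,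
    neg_mul, mul_neg, sg_mul, List.cons_append, List.nil_append]
  module

lemma psi_baa : ψ baa = (1 : ℂ) • sg [0, 0, 1] + (-2 : ℂ) • sg [0, 1, 0] + (1 : ℂ) • sg [1, 0, 0] := by
  rw [show baa = ⁅ba, genA⁆ from rfl, LieHom.map_lie, psi_ba, psi_genA, Ring.lie_def]
  simp only [sub_mul, mul_sub, add_mul, mul_add, smul_mul_assoc, mul_smul_comm,
    neg_mul, mul_neg, sg_mul, List.cons_append, List.nil_append]
  module

lemma psi_bab : ψ bab = (-1 : ℂ) • sg [0, 1, 1] + (2 : ℂ) • sg [1, 0, 1] + (-1 : ℂ) • sg [1, 1, 0] := by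
  rw [show bab = ⁅ba, genB⁆ from rfl, LieHom.map_lie, psi_ba, psi_genB, Ring.lie_def]
  simp only [sub_mul, mul_sub, add_mul, mul_add, smul_mul_assoc, mul_smul_comm,
    neg_mul, mul_neg, sg_mul, List.cons_append, List.nil_append]
  module

lemma psi_baaa : ψ baaa = (-1 : ℂ) • sg [0, 0, 0, 1] + (3 : ℂ) • sg [0, 0, 1, 0] + (-3 : ℂ) • sg [0, 1, 0, 0] + (1 : ℂ) • sg [1, 0, 0, 0] := by
  rw [show baaa = ⁅baa, genA⁆ from rfl, LieHom.map_lie, psi_baa, psi_genA, Ring.lie_def]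
  simp only [sub_mul, mul_sub, add_mul, mul_add, smul_mul_assoc, mul_smul_comm,
    neg_mul, mul_neg, sg_mul, List.cons_append, List.nil_append]
  module

lemma psi_baab : ψ baab = (1 : ℂ) • sg [0, 0, 1, 1] + (-2 : ℂ) • sg [0, 1, 0, 1] + (2 : ℂ) • sg [1, 0, 1, 0] + (-1 : ℂ) • sg [1, 1, 0, 0] := by
  rw [show baab = ⁅baa, genB⁆ from rfl, LieHom.map_lie, psi_baa, psi_genB, Ring.lie_def]
  simp only [sub_mul, mul_sub, add_mul, mul_add, smul_mul_assoc, mul_smul_comm,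
    neg_mul, mul_neg, sg_mul, List.cons_append, List.nil_append]
  module

lemma psi_babb : ψ babb = (-1 : ℂ) • sg [0, 1, 1, 1] + (3 : ℂ) • sg [1, 0, 1, 1] + (-3 : ℂ) • sg [1, 1, 0, 1] + (1 : ℂ) • sg [1, 1, 1, 0] := by
  rw [show babb = ⁅bab, genB⁆ from rfl, LieHom.map_lie, psi_bab, psi_genB, Ring.lie_def]
  simp only [sub_mul, mul_sub, add_mul, mul_add, smul_mul_assoc, mul_smul_comm,
    neg_mul, mul_neg, sg_mul, List.cons_append, List.nil_append]
  module

lemma psi_d1 : ψ d1 = (1 : ℂ) • sg [0, 0, 0, 0, 1] + (-4 : ℂ) • sg [0, 0, 0, 1, 0] + (6 : ℂ) • sg [0, 0, 1, 0, 0] + (-4 : ℂ) • sg [0, 1, 0, 0, 0] + (1 : ℂ) • sg [1, 0, 0, 0, 0] := by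
  rw [show d1 = ⁅baaa, genA⁆ from rfl, LieHom.map_lie, psi_baaa, psi_genA, Ring.lie_def]
  simp only [sub_mul, mul_sub, add_mul, mul_add, smul_mul_assoc, mul_smul_comm,
    neg_mul, mul_neg, sg_mul, List.cons_append, List.nil_append]
  module

lemma psi_d2 : ψ d2 = (-1 : ℂ) • sg [0, 0, 0, 1, 1] + (3 : ℂ) • sg [0, 0, 1, 0, 1] + (-3 : ℂ) • sg [0, 1, 0, 0, 1] + (2 : ℂ) • sg [1, 0, 0, 0, 1] + (-3 : ℂ) • sg [1, 0, 0, 1, 0] + (3 : ℂ) • sg [1, 0, 1, 0, 0] + (-1 : ℂ) • sg [1, 1, 0, 0, 0] := by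
  rw [show d2 = ⁅baaa, genB⁆ from rfl, LieHom.map_lie, psi_baaa, psi_genB, Ring.lie_def]
  simp only [sub_mul, mul_sub, add_mul, mul_add, smul_mul_assoc, mul_smul_comm,
    neg_mul, mul_neg, sg_mul, List.cons_append, List.nil_append]
  module

lemma psi_d3 : ψ d3 = (1 : ℂ) • sg [0, 0, 1, 1, 1] + (-2 : ℂ) • sg [0, 1, 0, 1, 1] + (-1 : ℂ) • sg [1, 0, 0, 1, 1] + (4 : ℂ) • sg [1, 0, 1, 0, 1] + (-1 : ℂ) • sg [1, 1, 0, 0, 1] + (-2 : ℂ) • sg [1, 1, 0, 1, 0] + (1 : ℂ) • sg [1, 1, 1, 0, 0] := by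
  rw [show d3 = ⁅baab, genB⁆ from rfl, LieHom.map_lie, psi_baab, psi_genB, Ring.lie_def]
  simp only [sub_mul, mul_sub, add_mul, mul_add, smul_mul_assoc, mul_smul_comm,
    neg_mul, mul_neg, sg_mul, List.cons_append, List.nil_append]
  module

lemma psi_d4 : ψ d4 = (-1 : ℂ) • sg [0, 1, 1, 1, 1] + (4 : ℂ) • sg [1, 0, 1, 1, 1] + (-6 : ℂ) • sg [1, 1, 0, 1, 1] + (4 : ℂ) • sg [1, 1, 1, 0, 1] + (-1 : ℂ) • sg [1, 1, 1, 1, 0] := by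
  rw [show d4 = ⁅babb, genB⁆ from rfl, LieHom.map_lie, psi_babb, psi_genB, Ring.lie_def]
  simp only [sub_mul, mul_sub, add_mul, mul_add, smul_mul_assoc, mul_smul_comm,
    neg_mul, mul_neg, sg_mul, List.cons_append, List.nil_append]
  module

lemma psi_u1 : ψ u1 = (-1 : ℂ) • sg [0, 0, 0, 0, 0, 1] + (5 : ℂ) • sg [0, 0, 0, 0, 1, 0] + (-10 : ℂ) • sg [0, 0, 0, 1, 0, 0] + (10 : ℂ) • sg [0, 0, 1, 0, 0, 0] + (-5 : ℂ) • sg [0, 1, 0, 0, 0, 0] + (1 : ℂ) • sg [1, 0, 0, 0, 0, 0] := by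
  rw [show u1 = ⁅d1, genA⁆ from rfl, LieHom.map_lie, psi_d1, psi_genA, Ring.lie_def]
  simp only [sub_mul, mul_sub, add_mul, mul_add, smul_mul_assoc, mul_smul_comm,
    neg_mul, mul_neg, sg_mul, List.cons_append, List.nil_append]
  module

lemma psi_u2 : ψ u2 = (1 : ℂ) • sg [0, 0, 0, 0, 1, 1] + (-4 : ℂ) • sg [0, 0, 0, 1, 0, 1] + (6 : ℂ) • sg [0, 0, 1, 0, 0, 1] + (-4 : ℂ) • sg [0, 1, 0, 0, 0, 1] + (4 : ℂ) • sg [1, 0, 0, 0, 1, 0] + (-6 : ℂ) • sg [1, 0, 0, 1, 0, 0] + (4 : ℂ) • sg [1, 0, 1, 0, 0, 0] + (-1 : ℂ) • sg [1, 1, 0, 0, 0, 0] := by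
  rw [show u2 = ⁅d1, genB⁆ from rfl, LieHom.map_lie, psi_d1, psi_genB, Ring.lie_def]
  simp only [sub_mul, mul_sub, add_mul, mul_add, smul_mul_assoc, mul_smul_comm,
    neg_mul, mul_neg, sg_mul, List.cons_append, List.nil_append]
  module

lemma psi_u3 : ψ u3 = (-1 : ℂ) • sg [0, 0, 0, 1, 1, 1] + (3 : ℂ) • sg [0, 0, 1, 0, 1, 1] + (-3 : ℂ) • sg [0, 1, 0, 0, 1, 1] + (3 : ℂ) • sg [1, 0, 0, 0, 1, 1] + (-6 : ℂ) • sg [1, 0, 0, 1, 0, 1] + (6 : ℂ) • sg [1, 0, 1, 0, 0, 1] + (-3 : ℂ) • sg [1, 1, 0, 0, 0, 1] + (3 : ℂ) • sg [1, 1, 0, 0, 1, 0] + (-3 : ℂ) • sg [1, 1, 0, 1, 0, 0] + (1 : ℂ) • sg [1, 1, 1, 0, 0, 0] := by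
  rw [show u3 = ⁅d2, genB⁆ from rfl, LieHom.map_lie, psi_d2, psi_genB, Ring.lie_def]
  simp only [sub_mul, mul_sub, add_mul, mul_add, smul_mul_assoc, mul_smul_comm,
    neg_mul, mul_neg, sg_mul, List.cons_append, List.nil_append]
  module

lemma psi_u4 : ψ u4 = (1 : ℂ) • sg [0, 0, 1, 1, 1, 1] + (-2 : ℂ) • sg [0, 1, 0, 1, 1, 1] + (-2 : ℂ) • sg [1, 0, 0, 1, 1, 1] + (6 : ℂ) • sg [1, 0, 1, 0, 1, 1] + (-6 : ℂ) • sg [1, 1, 0, 1, 0, 1] + (2 : ℂ) • sg [1, 1, 1, 0, 0, 1] + (2 : ℂ) • sg [1, 1, 1, 0, 1, 0] + (-1 : ℂ) • sg [1, 1, 1, 1, 0, 0] := by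
  rw [show u4 = ⁅d3, genB⁆ from rfl, LieHom.map_lie, psi_d3, psi_genB, Ring.lie_def]
  simp only [sub_mul, mul_sub, add_mul, mul_add, smul_mul_assoc, mul_smul_comm,
    neg_mul, mul_neg, sg_mul, List.cons_append, List.nil_append]
  module

lemma psi_u5 : ψ u5 = (-1 : ℂ) • sg [0, 1, 1, 1, 1, 1] + (5 : ℂ) • sg [1, 0, 1, 1, 1, 1] + (-10 : ℂ) • sg [1, 1, 0, 1, 1, 1] + (10 : ℂ) • sg [1, 1, 1, 0, 1, 1] + (-5 : ℂ) • sg [1, 1, 1, 1, 0, 1] + (1 : ℂ) • sg [1, 1, 1, 1, 1, 0] := by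
  rw [show u5 = ⁅d4, genB⁆ from rfl, LieHom.map_lie, psi_d4, psi_genB, Ring.lie_def]
  simp only [sub_mul, mul_sub, add_mul, mul_add, smul_mul_assoc, mul_smul_comm,
    neg_mul, mul_neg, sg_mul, List.cons_append, List.nil_append]
  module

lemma psi_u6 : ψ u6 = (-1 : ℂ) • sg [0, 0, 0, 1, 0, 1] + (1 : ℂ) • sg [0, 0, 0, 1, 1, 0] + (3 : ℂ) • sg [0, 0, 1, 0, 0, 1] + (-3 : ℂ) • sg [0, 0, 1, 0, 1, 0] + (-2 : ℂ) • sg [0, 1, 0, 0, 0, 1] + (3 : ℂ) • sg [0, 1, 0, 1, 0, 0] + (-1 : ℂ) • sg [0, 1, 1, 0, 0, 0] + (2 : ℂ) • sg [1, 0, 0, 0, 1, 0] + (-3 : ℂ) • sg [1, 0, 0, 1, 0, 0] + (1 : ℂ) • sg [1, 0, 1, 0, 0, 0] := by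
  rw [show u6 = ⁅ba, baaa⁆ from rfl, LieHom.map_lie, psi_ba, psi_baaa, Ring.lie_def]
  simp only [sub_mul, mul_sub, add_mul, mul_add, smul_mul_assoc, mul_smul_comm,
    neg_mul, mul_neg, sg_mul, List.cons_append, List.nil_append]
  module

lemma psi_u7 : ψ u7 = (1 : ℂ) • sg [0, 0, 1, 1, 0, 1] + (-1 : ℂ) • sg [0, 0, 1, 1, 1, 0] + (-1 : ℂ) • sg [0, 1, 0, 0, 1, 1] + (2 : ℂ) • sg [0, 1, 0, 1, 1, 0] + (-2 : ℂ) • sg [0, 1, 1, 0, 1, 0] + (1 : ℂ) • sg [0, 1, 1, 1, 0, 0] + (1 : ℂ) • sg [1, 0, 0, 0, 1, 1] + (-2 : ℂ) • sg [1, 0, 0, 1, 0, 1] + (2 : ℂ) • sg [1, 0, 1, 0, 0, 1] + (-1 : ℂ) • sg [1, 0, 1, 1, 0, 0] + (-1 : ℂ) • sg [1, 1, 0, 0, 0, 1] + (1 : ℂ) • sg [1, 1, 0, 0, 1, 0] := by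
  rw [show u7 = ⁅ba, baab⁆ from rfl, LieHom.map_lie, psi_ba, psi_baab, Ring.lie_def]
  simp only [sub_mul, mul_sub, add_mul, mul_add, smul_mul_assoc, mul_smul_comm,
    neg_mul, mul_neg, sg_mul, List.cons_append, List.nil_append]
  module

lemma psi_u8 : ψ u8 = (1 : ℂ) • sg [0, 1, 0, 1, 1, 1] + (-3 : ℂ) • sg [0, 1, 1, 0, 1, 1] + (2 : ℂ) • sg [0, 1, 1, 1, 0, 1] + (-1 : ℂ) • sg [1, 0, 0, 1, 1, 1] + (3 : ℂ) • sg [1, 0, 1, 0, 1, 1] + (-2 : ℂ) • sg [1, 0, 1, 1, 1, 0] + (-3 : ℂ) • sg [1, 1, 0, 1, 0, 1] + (3 : ℂ) • sg [1, 1, 0, 1, 1, 0] + (1 : ℂ) • sg [1, 1, 1, 0, 0, 1] + (-1 : ℂ) • sg [1, 1, 1, 0, 1, 0] := by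
  rw [show u8 = ⁅ba, babb⁆ from rfl, LieHom.map_lie, psi_ba, psi_babb, Ring.lie_def]
  simp only [sub_mul, mul_sub, add_mul, mul_add, smul_mul_assoc, mul_smul_comm,
    neg_mul, mul_neg, sg_mul, List.cons_append, List.nil_append]
  module

lemma psi_I6 : ψ I6 = (1 : ℂ) • sg [0, 0, 1, 0, 1, 1] + (-2 : ℂ) • sg [0, 0, 1, 1, 0, 1] + (1 : ℂ) • sg [0, 0, 1, 1, 1, 0] + (-2 : ℂ) • sg [0, 1, 0, 0, 1, 1] + (4 : ℂ) • sg [0, 1, 0, 1, 0, 1] + (-2 : ℂ) • sg [0, 1, 0, 1, 1, 0] + (-1 : ℂ) • sg [0, 1, 1, 0, 0, 1] + (2 : ℂ) • sg [0, 1, 1, 0, 1, 0] + (-1 : ℂ) • sg [0, 1, 1, 1, 0, 0] + (1 : ℂ) • sg [1, 0, 0, 0, 1, 1] + (-2 : ℂ) • sg [1, 0, 0, 1, 0, 1] + (1 : ℂ) • sg [1, 0, 0, 1, 1, 0] + (2 : ℂ) • sg [1, 0, 1, 0, 0, 1] + (-4 : ℂ) • sg [1, 0, 1, 0, 1, 0]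 + (2 : ℂ) • sg [1, 0, 1, 1, 0, 0] + (-1 : ℂ) • sg [1, 1, 0, 0, 0, 1] + (2 : ℂ) • sg [1, 1, 0, 0, 1, 0] + (-1 : ℂ) • sg [1, 1, 0, 1, 0, 0] := by
  rw [show I6 = ⁅bab, baa⁆ from rfl, LieHom.map_lie, psi_bab, psi_baa, Ring.lie_def]
  simp only [sub_mul, mul_sub, add_mul, mul_add, smul_mul_assoc, mul_smul_comm,
    neg_mul, mul_neg, sg_mul, List.cons_append, List.nil_append]
  module

def wd0 : FreeMonoid (Fin 2) := FreeMonoid.ofList [0, 0, 0, 0, 0, 1]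
def wd1 : FreeMonoid (Fin 2) := FreeMonoid.ofList [0, 0, 0, 0, 1, 1]
def wd2 : FreeMonoid (Fin 2) := FreeMonoid.ofList [0, 0, 0, 1, 0, 1]
def wd3 : FreeMonoid (Fin 2) := FreeMonoid.ofList [0, 0, 0, 1, 1, 1]
def wd4 : FreeMonoid (Fin 2) := FreeMonoid.ofList [0, 0, 1, 0, 1, 1]
def wd5 : FreeMonoid (Fin 2) := FreeMonoid.ofList [0, 0, 1, 1, 0, 1]
def wd6 : FreeMonoid (Fin 2) := FreeMonoid.ofList [0, 0, 1, 1, 1, 1]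
def wd7 : FreeMonoid (Fin 2) := FreeMonoid.ofList [0, 1, 0, 1, 1, 1]
def wd8 : FreeMonoid (Fin 2) := FreeMonoid.ofList [0, 1, 1, 1, 1, 1]

lemma evL_1_0 : ev wd0 (ψ u1) = (-1 : ℂ) := by
  rw [psi_u1]
  simp (config := { decide := true }) only [wd0, sg, map_add, map_smul, ev_single,
    smul_eq_mul, mul_ite, mul_one, mul_zero]
  norm_num

lemma evL_1_1 : ev wd1 (ψ u1) = (0 : ℂ) := by
  rw [psi_u1]
  simp (config := { decide := true }) only [wd1, sg, map_add, map_smul, ev_single,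
    smul_eq_mul, mul_ite, mul_one, mul_zero]
  norm_num

lemma evL_1_2 : ev wd2 (ψ u1) = (0 : ℂ) := by
  rw [psi_u1]
  simp (config := { decide := true }) only [wd2, sg, map_add, map_smul, ev_single,
    smul_eq_mul, mul_ite, mul_one, mul_zero]
  norm_num

lemma evL_1_3 : ev wd3 (ψ u1) = (0 : ℂ) := by
  rw [psi_u1]
  simp (config := { decide := true }) only [wd3, sg, map_add, map_smul, ev_single,
    smul_eq_mul, mul_ite, mul_one, mul_zero]
  norm_num

lemma evL_1_4 : ev wd4 (ψ u1) = (0 : ℂ) := by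
  rw [psi_u1]
  simp (config := { decide := true }) only [wd4, sg, map_add, map_smul, ev_single,
    smul_eq_mul, mul_ite, mul_one, mul_zero]
  norm_num

lemma evL_1_5 : ev wd5 (ψ u1) = (0 : ℂ) := by
  rw [psi_u1]
  simp (config := { decide := true }) only [wd5, sg, map_add, map_smul, ev_single,
    smul_eq_mul, mul_ite, mul_one, mul_zero]
  norm_num

lemma evL_1_6 : ev wd6 (ψ u1) = (0 : ℂ) := by
  rw [psi_u1]
  simp (config := { decide := true }) only [wd6, sg, map_add, map_smul, ev_single,
    smul_eq_mul, mul_ite, mul_one, mul_zero]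
  norm_num

lemma evL_1_7 : ev wd7 (ψ u1) = (0 : ℂ) := by
  rw [psi_u1]
  simp (config := { decide := true }) only [wd7, sg, map_add, map_smul, ev_single,
    smul_eq_mul, mul_ite, mul_one, mul_zero]
  norm_num

lemma evL_1_8 : ev wd8 (ψ u1) = (0 : ℂ) := by
  rw [psi_u1]
  simp (config := { decide := true }) only [wd8, sg, map_add, map_smul, ev_single,
    smul_eq_mul, mul_ite, mul_one, mul_zero]
  norm_num

lemma evL_2_0 : ev wd0 (ψ u2) = (0 : ℂ) := by
  rw [psi_u2]
  simp (config := { decide := true }) only [wd0, sg, map_add, map_smul, ev_single,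
    smul_eq_mul, mul_ite, mul_one, mul_zero]
  norm_num

lemma evL_2_1 : ev wd1 (ψ u2) = (1 : ℂ) := by
  rw [psi_u2]
  simp (config := { decide := true }) only [wd1, sg, map_add, map_smul, ev_single,
    smul_eq_mul, mul_ite, mul_one, mul_zero]
  norm_num

lemma evL_2_2 : ev wd2 (ψ u2) = (-4 : ℂ) := by
  rw [psi_u2]
  simp (config := { decide := true }) only [wd2, sg, map_add, map_smul, ev_single,
    smul_eq_mul, mul_ite, mul_one, mul_zero]
  norm_num

lemma evL_2_3 : ev wd3 (ψ u2) = (0 : ℂ) := by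
  rw [psi_u2]
  simp (config := { decide := true }) only [wd3, sg, map_add, map_smul, ev_single,
    smul_eq_mul, mul_ite, mul_one, mul_zero]
  norm_num

lemma evL_2_4 : ev wd4 (ψ u2) = (0 : ℂ) := by
  rw [psi_u2]
  simp (config := { decide := true }) only [wd4, sg, map_add, map_smul, ev_single,
    smul_eq_mul, mul_ite, mul_one, mul_zero]
  norm_num

lemma evL_2_5 : ev wd5 (ψ u2) = (0 : ℂ) := by
  rw [psi_u2]
  simp (config := { decide := true }) only [wd5, sg, map_add, map_smul, ev_single,
    smul_eq_mul, mul_ite, mul_one, mul_zero]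
  norm_num

lemma evL_2_6 : ev wd6 (ψ u2) = (0 : ℂ) := by
  rw [psi_u2]
  simp (config := { decide := true }) only [wd6, sg, map_add, map_smul, ev_single,
    smul_eq_mul, mul_ite, mul_one, mul_zero]
  norm_num

lemma evL_2_7 : ev wd7 (ψ u2) = (0 : ℂ) := by
  rw [psi_u2]
  simp (config := { decide := true }) only [wd7, sg, map_add, map_smul, ev_single,
    smul_eq_mul, mul_ite, mul_one, mul_zero]
  norm_num

lemma evL_2_8 : ev wd8 (ψ u2) = (0 : ℂ) := by
  rw [psi_u2]
  simp (config := { decide := true }) only [wd8, sg, map_add, map_smul, ev_single,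
    smul_eq_mul, mul_ite, mul_one, mul_zero]
  norm_num

lemma evL_3_0 : ev wd0 (ψ u3) = (0 : ℂ) := by
  rw [psi_u3]
  simp (config := { decide := true }) only [wd0, sg, map_add, map_smul, ev_single,
    smul_eq_mul, mul_ite, mul_one, mul_zero]
  norm_num

lemma evL_3_1 : ev wd1 (ψ u3) = (0 : ℂ) := by
  rw [psi_u3]
  simp (config := { decide := true }) only [wd1, sg, map_add, map_smul, ev_single,
    smul_eq_mul, mul_ite, mul_one, mul_zero]
  norm_num

lemma evL_3_2 : ev wd2 (ψ u3) = (0 : ℂ) := by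
  rw [psi_u3]
  simp (config := { decide := true }) only [wd2, sg, map_add, map_smul, ev_single,
    smul_eq_mul, mul_ite, mul_one, mul_zero]
  norm_num

lemma evL_3_3 : ev wd3 (ψ u3) = (-1 : ℂ) := by
  rw [psi_u3]
  simp (config := { decide := true }) only [wd3, sg, map_add, map_smul, ev_single,
    smul_eq_mul, mul_ite, mul_one, mul_zero]
  norm_num

lemma evL_3_4 : ev wd4 (ψ u3) = (3 : ℂ) := by
  rw [psi_u3]
  simp (config := { decide := true }) only [wd4, sg, map_add, map_smul, ev_single,
    smul_eq_mul, mul_ite, mul_one, mul_zero]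
  norm_num

lemma evL_3_5 : ev wd5 (ψ u3) = (0 : ℂ) := by
  rw [psi_u3]
  simp (config := { decide := true }) only [wd5, sg, map_add, map_smul, ev_single,
    smul_eq_mul, mul_ite, mul_one, mul_zero]
  norm_num

lemma evL_3_6 : ev wd6 (ψ u3) = (0 : ℂ) := by
  rw [psi_u3]
  simp (config := { decide := true }) only [wd6, sg, map_add, map_smul, ev_single,
    smul_eq_mul, mul_ite, mul_one, mul_zero]
  norm_num

lemma evL_3_7 : ev wd7 (ψ u3) = (0 : ℂ) := by
  rw [psi_u3]
  simp (config := { decide := true }) only [wd7, sg, map_add, map_smul, ev_single,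
    smul_eq_mul, mul_ite, mul_one, mul_zero]
  norm_num

lemma evL_3_8 : ev wd8 (ψ u3) = (0 : ℂ) := by
  rw [psi_u3]
  simp (config := { decide := true }) only [wd8, sg, map_add, map_smul, ev_single,
    smul_eq_mul, mul_ite, mul_one, mul_zero]
  norm_num

lemma evL_4_0 : ev wd0 (ψ u4) = (0 : ℂ) := by
  rw [psi_u4]
  simp (config := { decide := true }) only [wd0, sg, map_add, map_smul, ev_single,
    smul_eq_mul, mul_ite, mul_one, mul_zero]
  norm_num

lemma evL_4_1 : ev wd1 (ψ u4) = (0 : ℂ) := by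
  rw [psi_u4]
  simp (config := { decide := true }) only [wd1, sg, map_add, map_smul, ev_single,
    smul_eq_mul, mul_ite, mul_one, mul_zero]
  norm_num

lemma evL_4_2 : ev wd2 (ψ u4) = (0 : ℂ) := by
  rw [psi_u4]
  simp (config := { decide := true }) only [wd2, sg, map_add, map_smul, ev_single,
    smul_eq_mul, mul_ite, mul_one, mul_zero]
  norm_num

lemma evL_4_3 : ev wd3 (ψ u4) = (0 : ℂ) := by
  rw [psi_u4]
  simp (config := { decide := true }) only [wd3, sg, map_add, map_smul, ev_single,
    smul_eq_mul, mul_ite, mul_one, mul_zero]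
  norm_num

lemma evL_4_4 : ev wd4 (ψ u4) = (0 : ℂ) := by
  rw [psi_u4]
  simp (config := { decide := true }) only [wd4, sg, map_add, map_smul, ev_single,
    smul_eq_mul, mul_ite, mul_one, mul_zero]
  norm_num

lemma evL_4_5 : ev wd5 (ψ u4) = (0 : ℂ) := by
  rw [psi_u4]
  simp (config := { decide := true }) only [wd5, sg, map_add, map_smul, ev_single,
    smul_eq_mul, mul_ite, mul_one, mul_zero]
  norm_num

lemma evL_4_6 : ev wd6 (ψ u4) = (1 : ℂ) := by
  rw [psi_u4]
  simp (config := { decide := true }) only [wd6, sg, map_add, map_smul, ev_single,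
    smul_eq_mul, mul_ite, mul_one, mul_zero]
  norm_num

lemma evL_4_7 : ev wd7 (ψ u4) = (-2 : ℂ) := by
  rw [psi_u4]
  simp (config := { decide := true }) only [wd7, sg, map_add, map_smul, ev_single,
    smul_eq_mul, mul_ite, mul_one, mul_zero]
  norm_num

lemma evL_4_8 : ev wd8 (ψ u4) = (0 : ℂ) := by
  rw [psi_u4]
  simp (config := { decide := true }) only [wd8, sg, map_add, map_smul, ev_single,
    smul_eq_mul, mul_ite, mul_one, mul_zero]
  norm_num

lemma evL_5_0 : ev wd0 (ψ u5) = (0 : ℂ) := by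
  rw [psi_u5]
  simp (config := { decide := true }) only [wd0, sg, map_add, map_smul, ev_single,
    smul_eq_mul, mul_ite, mul_one, mul_zero]
  norm_num

lemma evL_5_1 : ev wd1 (ψ u5) = (0 : ℂ) := by
  rw [psi_u5]
  simp (config := { decide := true }) only [wd1, sg, map_add, map_smul, ev_single,
    smul_eq_mul, mul_ite, mul_one, mul_zero]
  norm_num

lemma evL_5_2 : ev wd2 (ψ u5) = (0 : ℂ) := by
  rw [psi_u5]
  simp (config := { decide := true }) only [wd2, sg, map_add, map_smul, ev_single,
    smul_eq_mul, mul_ite, mul_one, mul_zero]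
  norm_num

lemma evL_5_3 : ev wd3 (ψ u5) = (0 : ℂ) := by
  rw [psi_u5]
  simp (config := { decide := true }) only [wd3, sg, map_add, map_smul, ev_single,
    smul_eq_mul, mul_ite, mul_one, mul_zero]
  norm_num

lemma evL_5_4 : ev wd4 (ψ u5) = (0 : ℂ) := by
  rw [psi_u5]
  simp (config := { decide := true }) only [wd4, sg, map_add, map_smul, ev_single,
    smul_eq_mul, mul_ite, mul_one, mul_zero]
  norm_num

lemma evL_5_5 : ev wd5 (ψ u5) = (0 : ℂ) := by
  rw [psi_u5]
  simp (config := { decide := true }) only [wd5, sg, map_add, map_smul, ev_single,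
    smul_eq_mul, mul_ite, mul_one, mul_zero]
  norm_num

lemma evL_5_6 : ev wd6 (ψ u5) = (0 : ℂ) := by
  rw [psi_u5]
  simp (config := { decide := true }) only [wd6, sg, map_add, map_smul, ev_single,
    smul_eq_mul, mul_ite, mul_one, mul_zero]
  norm_num

lemma evL_5_7 : ev wd7 (ψ u5) = (0 : ℂ) := by
  rw [psi_u5]
  simp (config := { decide := true }) only [wd7, sg, map_add, map_smul, ev_single,
    smul_eq_mul, mul_ite, mul_one, mul_zero]
  norm_num

lemma evL_5_8 : ev wd8 (ψ u5) = (-1 : ℂ) := by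
  rw [psi_u5]
  simp (config := { decide := true }) only [wd8, sg, map_add, map_smul, ev_single,
    smul_eq_mul, mul_ite, mul_one, mul_zero]
  norm_num

lemma evL_6_0 : ev wd0 (ψ u6) = (0 : ℂ) := by
  rw [psi_u6]
  simp (config := { decide := true }) only [wd0, sg, map_add, map_smul, ev_single,
    smul_eq_mul, mul_ite, mul_one, mul_zero]
  norm_num

lemma evL_6_1 : ev wd1 (ψ u6) = (0 : ℂ) := by
  rw [psi_u6]
  simp (config := { decide := true }) only [wd1, sg, map_add, map_smul, ev_single,
    smul_eq_mul, mul_ite, mul_one, mul_zero]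
  norm_num

lemma evL_6_2 : ev wd2 (ψ u6) = (-1 : ℂ) := by
  rw [psi_u6]
  simp (config := { decide := true }) only [wd2, sg, map_add, map_smul, ev_single,
    smul_eq_mul, mul_ite, mul_one, mul_zero]
  norm_num

lemma evL_6_3 : ev wd3 (ψ u6) = (0 : ℂ) := by
  rw [psi_u6]
  simp (config := { decide := true }) only [wd3, sg, map_add, map_smul, ev_single,
    smul_eq_mul, mul_ite, mul_one, mul_zero]
  norm_num

lemma evL_6_4 : ev wd4 (ψ u6) = (0 : ℂ) := by
  rw [psi_u6]
  simp (config := { decide := true }) only [wd4, sg, map_add, map_smul, ev_single,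
    smul_eq_mul, mul_ite, mul_one, mul_zero]
  norm_num

lemma evL_6_5 : ev wd5 (ψ u6) = (0 : ℂ) := by
  rw [psi_u6]
  simp (config := { decide := true }) only [wd5, sg, map_add, map_smul, ev_single,
    smul_eq_mul, mul_ite, mul_one, mul_zero]
  norm_num

lemma evL_6_6 : ev wd6 (ψ u6) = (0 : ℂ) := by
  rw [psi_u6]
  simp (config := { decide := true }) only [wd6, sg, map_add, map_smul, ev_single,
    smul_eq_mul, mul_ite, mul_one, mul_zero]
  norm_num

lemma evL_6_7 : ev wd7 (ψ u6) = (0 : ℂ) := by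
  rw [psi_u6]
  simp (config := { decide := true }) only [wd7, sg, map_add, map_smul, ev_single,
    smul_eq_mul, mul_ite, mul_one, mul_zero]
  norm_num

lemma evL_6_8 : ev wd8 (ψ u6) = (0 : ℂ) := by
  rw [psi_u6]
  simp (config := { decide := true }) only [wd8, sg, map_add, map_smul, ev_single,
    smul_eq_mul, mul_ite, mul_one, mul_zero]
  norm_num

lemma evL_7_0 : ev wd0 (ψ u7) = (0 : ℂ) := by
  rw [psi_u7]
  simp (config := { decide := true }) only [wd0, sg, map_add, map_smul, ev_single,
    smul_eq_mul, mul_ite, mul_one, mul_zero]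
  norm_num

lemma evL_7_1 : ev wd1 (ψ u7) = (0 : ℂ) := by
  rw [psi_u7]
  simp (config := { decide := true }) only [wd1, sg, map_add, map_smul, ev_single,
    smul_eq_mul, mul_ite, mul_one, mul_zero]
  norm_num

lemma evL_7_2 : ev wd2 (ψ u7) = (0 : ℂ) := by
  rw [psi_u7]
  simp (config := { decide := true }) only [wd2, sg, map_add, map_smul, ev_single,
    smul_eq_mul, mul_ite, mul_one, mul_zero]
  norm_num

lemma evL_7_3 : ev wd3 (ψ u7) = (0 : ℂ) := by
  rw [psi_u7]
  simp (config := { decide := true }) only [wd3, sg, map_add, map_smul, ev_single,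
    smul_eq_mul, mul_ite, mul_one, mul_zero]
  norm_num

lemma evL_7_4 : ev wd4 (ψ u7) = (0 : ℂ) := by
  rw [psi_u7]
  simp (config := { decide := true }) only [wd4, sg, map_add, map_smul, ev_single,
    smul_eq_mul, mul_ite, mul_one, mul_zero]
  norm_num

lemma evL_7_5 : ev wd5 (ψ u7) = (1 : ℂ) := by
  rw [psi_u7]
  simp (config := { decide := true }) only [wd5, sg, map_add, map_smul, ev_single,
    smul_eq_mul, mul_ite, mul_one, mul_zero]
  norm_num

lemma evL_7_6 : ev wd6 (ψ u7) = (0 : ℂ) := by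
  rw [psi_u7]
  simp (config := { decide := true }) only [wd6, sg, map_add, map_smul, ev_single,
    smul_eq_mul, mul_ite, mul_one, mul_zero]
  norm_num

lemma evL_7_7 : ev wd7 (ψ u7) = (0 : ℂ) := by
  rw [psi_u7]
  simp (config := { decide := true }) only [wd7, sg, map_add, map_smul, ev_single,
    smul_eq_mul, mul_ite, mul_one, mul_zero]
  norm_num

lemma evL_7_8 : ev wd8 (ψ u7) = (0 : ℂ) := by
  rw [psi_u7]
  simp (config := { decide := true }) only [wd8, sg, map_add, map_smul, ev_single,
    smul_eq_mul, mul_ite, mul_one, mul_zero]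
  norm_num

lemma evL_8_0 : ev wd0 (ψ u8) = (0 : ℂ) := by
  rw [psi_u8]
  simp (config := { decide := true }) only [wd0, sg, map_add, map_smul, ev_single,
    smul_eq_mul, mul_ite, mul_one, mul_zero]
  norm_num

lemma evL_8_1 : ev wd1 (ψ u8) = (0 : ℂ) := by
  rw [psi_u8]
  simp (config := { decide := true }) only [wd1, sg, map_add, map_smul, ev_single,
    smul_eq_mul, mul_ite, mul_one, mul_zero]
  norm_num

lemma evL_8_2 : ev wd2 (ψ u8) = (0 : ℂ) := by
  rw [psi_u8]
  simp (config := { decide := true }) only [wd2, sg, map_add, map_smul, ev_single,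
    smul_eq_mul, mul_ite, mul_one, mul_zero]
  norm_num

lemma evL_8_3 : ev wd3 (ψ u8) = (0 : ℂ) := by
  rw [psi_u8]
  simp (config := { decide := true }) only [wd3, sg, map_add, map_smul, ev_single,
    smul_eq_mul, mul_ite, mul_one, mul_zero]
  norm_num

lemma evL_8_4 : ev wd4 (ψ u8) = (0 : ℂ) := by
  rw [psi_u8]
  simp (config := { decide := true }) only [wd4, sg, map_add, map_smul, ev_single,
    smul_eq_mul, mul_ite, mul_one, mul_zero]
  norm_num

lemma evL_8_5 : ev wd5 (ψ u8) = (0 : ℂ) := by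
  rw [psi_u8]
  simp (config := { decide := true }) only [wd5, sg, map_add, map_smul, ev_single,
    smul_eq_mul, mul_ite, mul_one, mul_zero]
  norm_num

lemma evL_8_6 : ev wd6 (ψ u8) = (0 : ℂ) := by
  rw [psi_u8]
  simp (config := { decide := true }) only [wd6, sg, map_add, map_smul, ev_single,
    smul_eq_mul, mul_ite, mul_one, mul_zero]
  norm_num

lemma evL_8_7 : ev wd7 (ψ u8) = (1 : ℂ) := by
  rw [psi_u8]
  simp (config := { decide := true }) only [wd7, sg, map_add, map_smul, ev_single,
    smul_eq_mul, mul_ite, mul_one, mul_zero]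
  norm_num

lemma evL_8_8 : ev wd8 (ψ u8) = (0 : ℂ) := by
  rw [psi_u8]
  simp (config := { decide := true }) only [wd8, sg, map_add, map_smul, ev_single,
    smul_eq_mul, mul_ite, mul_one, mul_zero]
  norm_num

lemma evL_9_0 : ev wd0 (ψ I6) = (0 : ℂ) := by
  rw [psi_I6]
  simp (config := { decide := true }) only [wd0, sg, map_add, map_smul, ev_single,
    smul_eq_mul, mul_ite, mul_one, mul_zero]
  norm_num

lemma evL_9_1 : ev wd1 (ψ I6) = (0 : ℂ) := by
  rw [psi_I6]
  simp (config := { decide := true }) only [wd1, sg, map_add, map_smul, ev_single,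
    smul_eq_mul, mul_ite, mul_one, mul_zero]
  norm_num

lemma evL_9_2 : ev wd2 (ψ I6) = (0 : ℂ) := by
  rw [psi_I6]
  simp (config := { decide := true }) only [wd2, sg, map_add, map_smul, ev_single,
    smul_eq_mul, mul_ite, mul_one, mul_zero]
  norm_num

lemma evL_9_3 : ev wd3 (ψ I6) = (0 : ℂ) := by
  rw [psi_I6]
  simp (config := { decide := true }) only [wd3, sg, map_add, map_smul, ev_single,
    smul_eq_mul, mul_ite, mul_one, mul_zero]
  norm_num

lemma evL_9_4 : ev wd4 (ψ I6) = (1 : ℂ) := by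
  rw [psi_I6]
  simp (config := { decide := true }) only [wd4, sg, map_add, map_smul, ev_single,
    smul_eq_mul, mul_ite, mul_one, mul_zero]
  norm_num

lemma evL_9_5 : ev wd5 (ψ I6) = (-2 : ℂ) := by
  rw [psi_I6]
  simp (config := { decide := true }) only [wd5, sg, map_add, map_smul, ev_single,
    smul_eq_mul, mul_ite, mul_one, mul_zero]
  norm_num

lemma evL_9_6 : ev wd6 (ψ I6) = (0 : ℂ) := by
  rw [psi_I6]
  simp (config := { decide := true }) only [wd6, sg, map_add, map_smul, ev_single,
    smul_eq_mul, mul_ite, mul_one, mul_zero]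
  norm_num

lemma evL_9_7 : ev wd7 (ψ I6) = (0 : ℂ) := by
  rw [psi_I6]
  simp (config := { decide := true }) only [wd7, sg, map_add, map_smul, ev_single,
    smul_eq_mul, mul_ite, mul_one, mul_zero]
  norm_num

lemma evL_9_8 : ev wd8 (ψ I6) = (0 : ℂ) := by
  rw [psi_I6]
  simp (config := { decide := true }) only [wd8, sg, map_add, map_smul, ev_single,
    smul_eq_mul, mul_ite, mul_one, mul_zero]
  norm_num

/-! ### Linear independence of the degree-6 spanning elements -/

lemma sum9 (f : Fin 9 → FL) :
    ∑ i, f i = f 0 + f 1 + f 2 + f 3 + f 4 + f 5 + f 6 + f 7 + f 8 := by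
  rw [Fin.sum_univ_castSucc, Fin.sum_univ_eight]; rfl

lemma tvec_indep' (g0 g1 g2 g3 g4 g5 g6 g7 g8 : ℂ)
    (hg : g0 • u1 + g1 • u2 + g2 • u3 + g3 • u4 + g4 • u5 + g5 • u6 + g6 • u7 + g7 • u8 +
      g8 • I6 = 0) :
    g0 = 0 ∧ g1 = 0 ∧ g2 = 0 ∧ g3 = 0 ∧ g4 = 0 ∧ g5 = 0 ∧ g6 = 0 ∧ g7 = 0 ∧ g8 = 0 := by
  have E : ∀ w : FreeMonoid (Fin 2),
      g0 * ev w (ψ u1) + g1 * ev w (ψ u2) + g2 * ev w (ψ u3) + g3 * ev w (ψ u4) +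
      g4 * ev w (ψ u5) + g5 * ev w (ψ u6) + g6 * ev w (ψ u7) + g7 * ev w (ψ u8) +
      g8 * ev w (ψ I6) = 0 := by
    intro w
    have h2 := congrArg (fun z => ev w (ψ.toLinearMap z)) hg
    simp only [map_add, map_smul, map_zero, smul_eq_mul, LieHom.coe_toLinearMap] at h2
    linear_combination h2
  have E0 := E wd0
  rw [evL_1_0, evL_2_0, evL_3_0, evL_4_0, evL_5_0, evL_6_0, evL_7_0, evL_8_0, evL_9_0] at E0
  have E1 := E wd1
  rw [evL_1_1, evL_2_1, evL_3_1, evL_4_1, evL_5_1, evL_6_1, evL_7_1, evL_8_1, evL_9_1] at E1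
  have E2 := E wd2
  rw [evL_1_2, evL_2_2, evL_3_2, evL_4_2, evL_5_2, evL_6_2, evL_7_2, evL_8_2, evL_9_2] at E2
  have E3 := E wd3
  rw [evL_1_3, evL_2_3, evL_3_3, evL_4_3, evL_5_3, evL_6_3, evL_7_3, evL_8_3, evL_9_3] at E3
  have E4 := E wd4
  rw [evL_1_4, evL_2_4, evL_3_4, evL_4_4, evL_5_4, evL_6_4, evL_7_4, evL_8_4, evL_9_4] at E4
  have E5 := E wd5
  rw [evL_1_5, evL_2_5, evL_3_5, evL_4_5, evL_5_5, evL_6_5, evL_7_5, evL_8_5, evL_9_5] at E5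
  have E6 := E wd6
  rw [evL_1_6, evL_2_6, evL_3_6, evL_4_6, evL_5_6, evL_6_6, evL_7_6, evL_8_6, evL_9_6] at E6
  have E7 := E wd7
  rw [evL_1_7, evL_2_7, evL_3_7, evL_4_7, evL_5_7, evL_6_7, evL_7_7, evL_8_7, evL_9_7] at E7
  have E8 := E wd8
  rw [evL_1_8, evL_2_8, evL_3_8, evL_4_8, evL_5_8, evL_6_8, evL_7_8, evL_8_8, evL_9_8] at E8
  have h0 : g0 = 0 := by linear_combination -E0
  have h1 : g1 = 0 := by linear_combination E1
  have h2 : g2 = 0 := by linear_combination -E3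
  have h3 : g3 = 0 := by linear_combination E6
  have h4 : g4 = 0 := by linear_combination -E8
  have h5 : g5 = 0 := by linear_combination -E2 - 4 * h1
  have h8 : g8 = 0 := by linear_combination E4 - 3 * h2
  have h6 : g6 = 0 := by linear_combination E5 + 2 * h8
  have h7 : g7 = 0 := by linear_combination E7 + 2 * h3
  exact ⟨h0, h1, h2, h3, h4, h5, h6, h7, h8⟩

/-- For the natural representation of sl₂(ℂ) on the free Lie algebra on `a, b`, the
space of Lie invariants of degree 6 is one-dimensional, spanned by
`I₆ = [[[b,a],b],[[b,a],a]]`. -/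
theorem invariants_degree_six
    (X H Y : LieDerivation ℂ FL FL)
    (hXa : X genA = 0) (hXb : X genB = genA)
    (hHa : H genA = genA) (hHb : H genB = -genB)
    (hYa : Y genA = genB) (hYb : Y genB = 0) :
    invariants X H Y 6 = Submodule.span ℂ {I6} ∧ I6 ≠ (0 : FL) := by
  have hne : I6 ≠ (0 : FL) := by
    intro h0
    have h1 := evL_9_4
    rw [h0, map_zero, map_zero] at h1
    exact one_ne_zero h1.symm
  have hmem : I6 ∈ invariants X H Y 6 := by
    simp only [invariants, Submodule.mem_inf, LinearMap.mem_ker]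
    refine ⟨⟨⟨?_, ?_⟩, ?_⟩, ?_⟩
    · exact Submodule.subset_span
        ⟨(((FreeMagma.of (1 : Fin 2)).mul (.of 0)).mul (.of 1)).mul
          (((FreeMagma.of 1).mul (.of 0)).mul (.of 0)), rfl, rfl⟩
    · exact X_I6 X hXa hXb
    · exact H_I6 H hHa hHb
    · exact Y_I6 Y hYa hYb
  refine ⟨le_antisymm ?_ ?_, hne⟩
  · intro v hv
    simp only [invariants, Submodule.mem_inf, LinearMap.mem_ker] at hv
    obtain ⟨⟨⟨hv6, hvX⟩, hvH⟩, -⟩ := hv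
    have hvX' : X v = 0 := hvX
    have hvH' : H v = 0 := hvH
    obtain ⟨c, hc⟩ := (Submodule.mem_span_range_iff_exists_fun ℂ).mp (homog6_le hv6)
    have hc' : c 0 • u1 + c 1 • u2 + c 2 • u3 + c 3 • u4 + c 4 • u5 + c 5 • u6 + c 6 • u7 +
        c 7 • u8 + c 8 • I6 = v := by
      rw [← hc, sum9 (f := fun i => c i • tvec i)]
      rfl
    have eH : (4 * c 0) • u1 + (2 * c 1) • u2 + (0 : ℂ) • u3 + (-2 * c 3) • u4 +
        (-4 * c 4) • u5 + (2 * c 5) • u6 + (0 : ℂ) • u7 + (-2 * c 7) • u8 + (0 : ℂ) • I6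
          = 0 := by
      have e1 : H (c 0 • u1 + c 1 • u2 + c 2 • u3 + c 3 • u4 + c 4 • u5 + c 5 • u6 + c 6 • u7 +
          c 7 • u8 + c 8 • I6) = 0 := by rw [hc']; exact hvH'
      simp only [map_add, map_smul, H_u1 H hHa hHb, H_u2 H hHa hHb, H_u3 H hHa hHb,
        H_u4 H hHa hHb, H_u5 H hHa hHb, H_u6 H hHa hHb, H_u7 H hHa hHb, H_u8 H hHa hHb,
        H_I6 H hHa hHb, smul_zero, add_zero] at e1
      linear_combination (norm := module) e1
    obtain ⟨k0, k1, -, k3, k4, k5, -, k7, -⟩ :=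
      tvec_indep' _ _ _ _ _ _ _ _ _ eH
    have hc0 : c 0 = 0 := by linear_combination k0 / 4
    have hc1 : c 1 = 0 := by linear_combination k1 / 2
    have hc3 : c 3 = 0 := by linear_combination -k3 / 2
    have hc4 : c 4 = 0 := by linear_combination -k4 / 4
    have hc5 : c 5 = 0 := by linear_combination k5 / 2
    have hc7 : c 7 = 0 := by linear_combination -k7 / 2
    have hv2 : c 2 • u3 + c 6 • u7 + c 8 • I6 = v := by
      rw [← hc', hc0, hc1, hc3, hc4, hc5, hc7]; module
    have eX : (0 : ℂ) • u1 + (2 * c 2) • u2 + (0 : ℂ) • u3 + (0 : ℂ) • u4 + (0 : ℂ) • u5 +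
        (c 6 - c 2) • u6 + (0 : ℂ) • u7 + (0 : ℂ) • u8 + (0 : ℂ) • I6 = 0 := by
      have e2 : X (c 2 • u3 + c 6 • u7 + c 8 • I6) = 0 := by rw [hv2]; exact hvX'
      simp only [map_add, map_smul, X_u3 X hXa hXb, X_u7 X hXa hXb, X_I6 X hXa hXb,
        smul_zero, add_zero] at e2
      linear_combination (norm := module) e2
    obtain ⟨-, k2, -, -, -, k6, -, -, -⟩ := tvec_indep' _ _ _ _ _ _ _ _ _ eX
    have hc2 : c 2 = 0 := by linear_combination k2 / 2
    have hc6 : c 6 = 0 := by linear_combination k6 + hc2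
    have hv3 : v = c 8 • I6 := by rw [← hv2, hc2, hc6]; module
    exact Submodule.mem_span_singleton.mpr ⟨c 8, hv3.symm⟩
  · rw [Submodule.span_le, Set.singleton_subset_iff]
    exact hmem
end
end
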